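/- Let D be a division ring with commuting automorphisms σ_y, σ_z, and form the iterated skew polynomial ring D[y;σ_y][z;σ_z] where σ_z acts trivially on y and σ_y trivially on z (so yz = zy). Let f = Σ_{i=0}^n f_i z^i with f_i ∈ D[y;σ_y], and suppose f = b·g holds in D(z;σ_z)[y;σ_y] with a ∈ D[z;σ_z]\{0}, i.e., a·f = b·g with b ∈ D[z;σ_z][y;σ_y] and g ∈ D[y;σ_y]. Then f_0 ∈ D[y;σ_y]·g. -/

import Mathlib

/-- An axiomatization of the skew polynomial ring `R[y; σ]`: the ring `A` is freely
spanned (additively) by the monomials `ι a * y ^ i`, and `y * ι a = ι (σ a) * y`. -/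
structure SkewPolyStructure (R A : Type*) [Ring R] [Ring A]
    (σ : R →+* R) (ι : R →+* A) (y : A) where
  coeff : A ≃+ (ℕ →₀ R)
  coeff_symm : ∀ c : ℕ →₀ R, coeff.symm c = c.sum fun i a => ι a * y ^ i
  twist : ∀ a : R, y * ι a = ι (σ a) * y

namespace SkewPolyStructure

variable {R A : Type*} [Ring R] [Ring A] {σ : R →+* R} {ι : R →+* A} {y : A}
  (s : SkewPolyStructure R A σ ι y)

lemma symm_single (i : ℕ) (c : R) : s.coeff.symm (Finsupp.single i c) = ι c * y ^ i := by
  rw [s.coeff_symm, Finsupp.sum_single_index (by simp)]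

lemma coeff_iota (c : R) : s.coeff (ι c) = Finsupp.single 0 c := by
  have h := s.symm_single 0 c
  rw [pow_zero, mul_one] at h
  rw [← h, AddEquiv.apply_symm_apply]

lemma iota_mul_symm (c : R) (d : ℕ →₀ R) :
    ι c * s.coeff.symm d = s.coeff.symm (d.mapRange (c * ·) (mul_zero c)) := by
  rw [s.coeff_symm, s.coeff_symm, Finsupp.mul_sum,
    Finsupp.sum_mapRange_index (by intro a; simp)]
  refine Finsupp.sum_congr fun i _ => ?_
  rw [← mul_assoc, ← map_mul]

lemma coeff_iota_mul (c : R) (x : A) (i : ℕ) :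
    s.coeff (ι c * x) i = c * s.coeff x i := by
  conv_lhs => rw [← s.coeff.symm_apply_apply x, s.iota_mul_symm, AddEquiv.apply_symm_apply]
  simp [Finsupp.mapRange_apply]

lemma y_mul_symm (c : ℕ →₀ R) :
    y * s.coeff.symm c =
      s.coeff.symm (Finsupp.mapDomain Nat.succ (c.mapRange σ (map_zero σ))) := by
  rw [s.coeff_symm, s.coeff_symm, Finsupp.mul_sum,
    Finsupp.sum_mapDomain_index (by intro b; simp) (by intro b m1 m2; rw [map_add, add_mul]),
    Finsupp.sum_mapRange_index (by intro a; simp)]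
  refine Finsupp.sum_congr fun i _ => ?_
  rw [← mul_assoc, s.twist, mul_assoc, ← pow_succ']

lemma coeff_y_mul (x : A) :
    s.coeff (y * x) = Finsupp.mapDomain Nat.succ ((s.coeff x).mapRange σ (map_zero σ)) := by
  conv_lhs => rw [← s.coeff.symm_apply_apply x, s.y_mul_symm, AddEquiv.apply_symm_apply]

lemma coeff_y_mul_zero (x : A) : s.coeff (y * x) 0 = 0 := by
  rw [s.coeff_y_mul]
  exact Finsupp.mapDomain_notin_range _ _ (by simp [Nat.succ_ne_zero])

lemma coeff_y_mul_succ (x : A) (i : ℕ) : s.coeff (y * x) (i + 1) = σ (s.coeff x i) := by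
  rw [s.coeff_y_mul]
  rw [show i + 1 = Nat.succ i from rfl, Finsupp.mapDomain_apply Nat.succ_injective]
  simp [Finsupp.mapRange_apply]

include s in
lemma y_mul_cancel (hσ : Function.Injective σ) {x x' : A} (h : y * x = y * x') : x = x' := by
  have key : s.coeff x = s.coeff x' := by
    ext i
    have h2 := congrArg (fun t => s.coeff t (i + 1)) h
    simp only [s.coeff_y_mul_succ] at h2
    exact hσ h2
  exact s.coeff.injective key

lemma exists_y_factor (hσ : Function.Bijective σ) {x : A} (h : s.coeff x 0 = 0) :
    ∃ x', x = y * x' ∧ ∀ i, σ (s.coeff x' i) = s.coeff x (i + 1) := by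
  set e := RingEquiv.ofBijective σ hσ with he
  set d : ℕ →₀ R := Finsupp.comapDomain Nat.succ (s.coeff x)
    (Nat.succ_injective.injOn) with hd
  refine ⟨s.coeff.symm (d.mapRange e.symm (map_zero e.symm)), ?_, ?_⟩
  · apply s.coeff.injective
    rw [s.coeff_y_mul, AddEquiv.apply_symm_apply]
    ext j
    match j with
    | 0 =>
      rw [Finsupp.mapDomain_notin_range _ _ (by simp [Nat.succ_ne_zero])]
      exact h
    | (i+1) =>
      rw [show i + 1 = Nat.succ i from rfl, Finsupp.mapDomain_apply Nat.succ_injective]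
      simp only [Finsupp.mapRange_apply, hd, Finsupp.comapDomain_apply]
      show _ = σ (e.symm _)
      exact (e.apply_symm_apply _).symm
  · intro i
    rw [AddEquiv.apply_symm_apply]
    simp only [Finsupp.mapRange_apply, hd, Finsupp.comapDomain_apply]
    show σ (e.symm _) = _
    exact e.apply_symm_apply _

lemma coeff_mul_zero (hσ : Function.Bijective σ) (u v : A) :
    s.coeff (u * v) 0 = s.coeff u 0 * s.coeff v 0 := by
  have h0 : s.coeff (u - ι (s.coeff u 0)) 0 = 0 := by
    rw [map_sub, Finsupp.sub_apply, s.coeff_iota, Finsupp.single_eq_same, sub_self]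
  obtain ⟨u', hu', -⟩ := s.exists_y_factor hσ h0
  have hu : u = ι (s.coeff u 0) + y * u' := by rw [← hu']; abel
  have hx : u * v = ι (s.coeff u 0) * v + y * (u' * v) := by
    rw [← mul_assoc, ← add_mul, ← hu]
  rw [hx, map_add, Finsupp.add_apply, s.coeff_y_mul_zero,
    s.coeff_iota_mul, add_zero]

end SkewPolyStructure

/-- In the iterated skew polynomial ring `D[y;σ_y][z;σ_z]` (with `σ_y`,
`σ_z` commuting automorphisms of the division ring `D`, `σ_z` acting trivially on `y`),
if `a · f = b · g` with `0 ≠ a ∈ D[z;σ_z]`, `b ∈ D[z;σ_z][y;σ_y]` and `g ∈ D[y;σ_y]`,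
then the constant `z`-coefficient `f₀` of `f` lies in the left ideal `D[y;σ_y] · g`. -/
theorem constant_z_coefficient_left_multiple
    (D B A : Type*) [DivisionRing D] [Ring B] [Ring A]
    (σy σz : D →+* D) (hσy : Function.Bijective σy) (hσz : Function.Bijective σz)
    (hcomm : σy.comp σz = σz.comp σy)
    (ιB : D →+* B) (yB : B) (sB : SkewPolyStructure D B σy ιB yB)
    -- `τ` is the extension of `σ_z` to `B = D[y;σ_y]` acting trivially on `y`
    (τ : B →+* B) (hτ : ∀ d : D, τ (ιB d) = ιB (σz d)) (hτy : τ yB = yB)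
    (ιA : B →+* A) (z : A) (sA : SkewPolyStructure B A τ ιA z)
    (f a b : A) (g : B)
    (ha : a ≠ 0)
    -- `a ∈ D[z;σ_z]`: all of its `z`-coefficients lie in `D ⊆ B`
    (haD : ∀ i : ℕ, (sA.coeff a) i ∈ Set.range ιB)
    (hab : a * f = b * ιA g) :
    ∃ h : B, (sA.coeff f) 0 = h * g := by
  set eσz := RingEquiv.ofBijective σz hσz with heσz
  -- τ acts coefficientwise by σz
  have hτB : ∀ c : ℕ →₀ D, τ (sB.coeff.symm c) = sB.coeff.symm (c.mapRange σz (map_zero σz)) := by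
    intro c
    rw [sB.coeff_symm, sB.coeff_symm, map_finsuppSum,
      Finsupp.sum_mapRange_index (by intro i; simp)]
    refine Finsupp.sum_congr fun i _ => ?_
    rw [map_mul, map_pow, hτ, hτy]
  have hcoeffτ : ∀ x : B, sB.coeff (τ x) = (sB.coeff x).mapRange σz (map_zero σz) := by
    intro x
    conv_lhs => rw [← sB.coeff.symm_apply_apply x, hτB, AddEquiv.apply_symm_apply]
  have hτbij : Function.Bijective τ := by
    apply Function.bijective_iff_has_inverse.mpr
    refine ⟨fun x => sB.coeff.symm ((sB.coeff x).mapRange eσz.symm (map_zero eσz.symm)), ?_, ?_⟩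
    · intro x
      dsimp only
      rw [hcoeffτ]
      have h2 : ((sB.coeff x).mapRange σz (map_zero σz)).mapRange eσz.symm
          (map_zero eσz.symm) = sB.coeff x := by
        ext i
        simp only [Finsupp.mapRange_apply]
        exact eσz.symm_apply_apply _
      rw [h2, sB.coeff.symm_apply_apply]
    · intro x
      dsimp only
      rw [hτB]
      have h2 : ((sB.coeff x).mapRange eσz.symm (map_zero eσz.symm)).mapRange σz
          (map_zero σz) = sB.coeff x := by
        ext i
        simp only [Finsupp.mapRange_apply]
        exact eσz.apply_symm_apply _
      rw [h2, sB.coeff.symm_apply_apply]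
  -- iterates of τ are multiplicative
  have hiter_mul : ∀ (m : ℕ) (u v : B), (⇑τ)^[m] (u * v) = (⇑τ)^[m] u * (⇑τ)^[m] v := by
    intro m
    induction m with
    | zero => intro u v; simp
    | succ k ih =>
      intro u v
      rw [Function.iterate_succ_apply', Function.iterate_succ_apply',
        Function.iterate_succ_apply', ih, map_mul]
  -- twist for powers of z
  have hzpow : ∀ (i : ℕ) (c : B), z ^ i * ιA c = ιA ((⇑τ)^[i] c) * z ^ i := by
    intro i
    induction i with
    | zero => intro c; simp
    | succ k ih =>
      intro c
      rw [pow_succ, mul_assoc, sA.twist, ← mul_assoc, ih, Function.iterate_succ_apply,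
        mul_assoc, ← pow_succ]
  -- every coefficient of x * ιA g is a left multiple of an iterate of g
  have hQ : ∀ c : ℕ →₀ B, ∀ m, ∃ h : B,
      sA.coeff (sA.coeff.symm c * ιA g) m = h * (⇑τ)^[m] g := by
    refine fun c => Finsupp.induction c ?_ ?_
    · intro m; exact ⟨0, by simp⟩
    · intro i bb c' hi hb ih m
      obtain ⟨h2, hh2⟩ := ih m
      by_cases hmi : m = i
      · subst hmi
        refine ⟨bb + h2, ?_⟩
        rw [map_add, add_mul, map_add, Finsupp.add_apply, hh2, add_mul]
        congr 1
        rw [sA.symm_single, mul_assoc, hzpow, ← mul_assoc, ← map_mul, ← sA.symm_single,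
          AddEquiv.apply_symm_apply, Finsupp.single_eq_same]
      · refine ⟨h2, ?_⟩
        rw [map_add, add_mul, map_add, Finsupp.add_apply, hh2]
        rw [sA.symm_single, mul_assoc, hzpow, ← mul_assoc, ← map_mul, ← sA.symm_single,
          AddEquiv.apply_symm_apply, Finsupp.single_eq_of_ne' (fun h => hmi h.symm), zero_add]
  have hP0 : ∀ x : A, ∀ m, ∃ h : B, sA.coeff (x * ιA g) m = h * (⇑τ)^[m] g := by
    intro x m
    have := hQ (sA.coeff x) m
    rwa [sA.coeff.symm_apply_apply] at this
  -- base step: when the constant coefficient of aa is nonzero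
  have base : ∀ aa ff r : A, (∀ i, sA.coeff aa i ∈ Set.range ιB) →
      sA.coeff aa 0 ≠ 0 → (∀ m, ∃ h : B, sA.coeff r m = h * (⇑τ)^[m] g) →
      aa * ff = r → ∃ h : B, sA.coeff ff 0 = h * g := by
    intro aa ff r hD h0 hPr heq
    obtain ⟨d, hd⟩ := hD 0
    obtain ⟨h, hh⟩ := hPr 0
    have hdne : d ≠ 0 := by
      rintro rfl
      rw [map_zero] at hd
      exact h0 hd.symm
    have e1 : ιB d * sA.coeff ff 0 = h * g := by
      rw [hd, ← sA.coeff_mul_zero hτbij, heq, hh, Function.iterate_zero_apply]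
    refine ⟨ιB d⁻¹ * h, ?_⟩
    calc sA.coeff ff 0 = ιB d⁻¹ * (ιB d * sA.coeff ff 0) := by
          rw [← mul_assoc, ← map_mul, inv_mul_cancel₀ hdne, map_one, one_mul]
      _ = ιB d⁻¹ * (h * g) := by rw [e1]
      _ = ιB d⁻¹ * h * g := by rw [mul_assoc]
  -- main induction on the least nonzero coefficient index of aa
  have main : ∀ n : ℕ, ∀ aa ff r : A, (∀ i, sA.coeff aa i ∈ Set.range ιB) →
      sA.coeff aa n ≠ 0 → (∀ m, ∃ h : B, sA.coeff r m = h * (⇑τ)^[m] g) →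
      aa * ff = r → ∃ h : B, sA.coeff ff 0 = h * g := by
    intro n
    induction n with
    | zero => exact base
    | succ n ih =>
      intro aa ff r hD hn hPr heq
      by_cases h0 : sA.coeff aa 0 = 0
      · have r0 : sA.coeff r 0 = 0 := by
          rw [← heq, sA.coeff_mul_zero hτbij, h0, zero_mul]
        obtain ⟨aa', haa', haas⟩ := sA.exists_y_factor hτbij h0
        obtain ⟨w, hw, hws⟩ := sA.exists_y_factor hτbij r0
        have hD' : ∀ i, sA.coeff aa' i ∈ Set.range ιB := by
          intro i
          obtain ⟨d, hd⟩ := hD (i + 1)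
          refine ⟨eσz.symm d, ?_⟩
          apply hτbij.1
          rw [haas i, ← hd, hτ]
          exact congrArg ιB (eσz.apply_symm_apply d)
        have hn' : sA.coeff aa' n ≠ 0 := by
          intro hc
          apply hn
          rw [← haas n, hc, map_zero]
        have hPw : ∀ m, ∃ h : B, sA.coeff w m = h * (⇑τ)^[m] g := by
          intro m
          obtain ⟨h, hh⟩ := hPr (m + 1)
          obtain ⟨h', hh'⟩ := hτbij.2 h
          refine ⟨h', ?_⟩
          apply hτbij.1
          rw [hws m, hh, map_mul, hh', Function.iterate_succ_apply']
        have heq' : aa' * ff = w := by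
          apply sA.y_mul_cancel hτbij.1
          rw [← mul_assoc, ← haa', heq, hw]
        exact ih aa' ff w hD' hn' hPw heq'
      · exact base aa ff r hD h0 hPr heq
  -- a has some nonzero coefficient
  obtain ⟨n, hn⟩ : ∃ n, sA.coeff a n ≠ 0 := by
    by_contra hc
    push_neg at hc
    apply ha
    have : sA.coeff a = 0 := Finsupp.ext fun i => hc i
    exact sA.coeff.injective (this.trans (map_zero sA.coeff).symm)
  exact main n a f (b * ιA g) haD hn (hP0 b) hab
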